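/- Let A be an r×n integer matrix of rank r with no column of zeros, and let H = HNF(A). Then A is decomposable if and only if the symmetric matrix HᵀH ∈ ℤ^{n×n} is reducible. -/

import Mathlib

open Matrix

/-- `M` is block-diagonal with a top-left `k × l` block and a complementary
bottom-right block: all entries outside these two blocks vanish. -/
def IsBlockSplit {m n : ℕ} (M : Matrix (Fin m) (Fin n) ℤ) (k l : ℕ) : Prop :=
  ∀ (i : Fin m) (j : Fin n),
    (((i : ℕ) < k ∧ l ≤ (j : ℕ)) ∨ (k ≤ (i : ℕ) ∧ (j : ℕ) < l)) → M i j = 0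

/-- An integer matrix is decomposable if, after multiplying by the inverse of a
unimodular matrix on the left and a permutation matrix on the right, it becomes
a nontrivial block-diagonal direct sum. -/
def Decomposable {m n : ℕ} (A : Matrix (Fin m) (Fin n) ℤ) : Prop :=
  ∃ (P : Matrix (Fin m) (Fin m) ℤ) (σ : Equiv.Perm (Fin n)) (k l : ℕ),
    IsUnit P.det ∧ 0 < k ∧ k < m ∧ 0 < l ∧ l < n ∧
      IsBlockSplit (P⁻¹ * A * σ.permMatrix ℤ) k l

/-- A square integer matrix is reducible if conjugating by a permutation matrix
makes it a nontrivial block-diagonal direct sum of square matrices. -/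
def Reducible {n : ℕ} (B : Matrix (Fin n) (Fin n) ℤ) : Prop :=
  ∃ (σ : Equiv.Perm (Fin n)) (s : ℕ), 0 < s ∧ s < n ∧
    IsBlockSplit ((σ.permMatrix ℤ)ᵀ * B * σ.permMatrix ℤ) s s

/-- Hermite normal form: row echelon with positive pivots strictly dominating the
nonnegative entries above them, and zero rows at the bottom. -/
def IsHermiteNormalForm {m n : ℕ} (H : Matrix (Fin m) (Fin n) ℤ) : Prop :=
  ∃ (r : ℕ) (hr : r ≤ m) (piv : Fin r → Fin n),
    StrictMono piv ∧
    (∀ (i : Fin r) (j : Fin n), (j : ℕ) < (piv i : ℕ) → H (Fin.castLE hr i) j = 0) ∧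
    (∀ i : Fin r, 0 < H (Fin.castLE hr i) (piv i)) ∧
    (∀ k i : Fin r, k < i →
      0 ≤ H (Fin.castLE hr k) (piv i) ∧
        H (Fin.castLE hr k) (piv i) < H (Fin.castLE hr i) (piv i)) ∧
    (∀ i : Fin m, r ≤ (i : ℕ) → ∀ j, H i j = 0)

/-- `H` is the Hermite normal form of `A`. -/
def IsHNFOf {m n : ℕ} (H A : Matrix (Fin m) (Fin n) ℤ) : Prop :=
  IsHermiteNormalForm H ∧ ∃ P : Matrix (Fin m) (Fin m) ℤ, IsUnit P.det ∧ A = P * H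

/-- Rank of an integer matrix, computed over `ℚ`. -/
noncomputable def rankQ {m n : ℕ} (A : Matrix (Fin m) (Fin n) ℤ) : ℕ :=
  (A.map (Int.cast : ℤ → ℚ)).rank

/-! ### Auxiliary lemmas -/

section Aux

/-- Key leading-coefficient / reduction lemma: if the `i`-th row of an HNF matrix `H`
splits as a sum of two integer row-lattice vectors supported on complementary column
sets, and the pivot of row `i` lies on the `J`-side, then the complementary part
vanishes. -/
lemma hnf_half {r n : ℕ} (H : Matrix (Fin r) (Fin n) ℤ) (p : Fin r → Fin n)
    (hmono : StrictMono p)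
    (hech : ∀ (i : Fin r) (j : Fin n), (j : ℕ) < (p i : ℕ) → H i j = 0)
    (hpos : ∀ i, 0 < H i (p i))
    (hred : ∀ k i : Fin r, k < i → 0 ≤ H k (p i) ∧ H k (p i) < H i (p i))
    (J : Fin n → Prop) (i : Fin r) (a b : Fin r → ℤ)
    (hab : ∀ m, a m + b m = if i = m then 1 else 0)
    (ha : ∀ c, ¬ J c → ∑ m, a m * H m c = 0)
    (hb : ∀ c, J c → ∑ m, b m * H m c = 0)
    (hJp : J (p i)) :
    ∀ c, ¬ J c → H i c = 0 := by
  have hsum : ∀ j, (∑ m, a m * H m j) + (∑ m, b m * H m j) = H i j := by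
    intro j
    rw [← Finset.sum_add_distrib]
    have h1 : ∀ m ∈ Finset.univ, a m * H m j + b m * H m j
        = if i = m then H m j else 0 := by
      intro m _
      rw [← add_mul, hab m]
      split_ifs <;> simp
    rw [Finset.sum_congr rfl h1]
    simp
  have hbz : ∀ N : ℕ, ∀ m : Fin r, (m : ℕ) = N → b m = 0 := by
    intro N
    induction N using Nat.strong_induction_on with
    | _ N IH =>
      intro m hmN
      have IH' : ∀ m' : Fin r, m' < m → b m' = 0 := by
        intro m' hm'
        exact IH (m' : ℕ) (by rw [← hmN]; exact hm') m' rfl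
      have hsingle : ∑ m', b m' * H m' (p m) = b m * H m (p m) := by
        apply Finset.sum_eq_single
        · intro m' _ hne
          rcases lt_or_gt_of_ne hne with hlt | hgt
          · rw [IH' m' hlt, zero_mul]
          · rw [hech m' (p m) (hmono hgt), mul_zero]
        · intro h; exact absurd (Finset.mem_univ m) h
      by_cases hJm : J (p m)
      · have h0 := hb (p m) hJm
        rw [hsingle] at h0
        exact (mul_eq_zero.mp h0).resolve_right (hpos m).ne'
      · have hane : ∑ m', a m' * H m' (p m) = 0 := ha _ hJm
        have hH : H i (p m) = b m * H m (p m) := by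
          rw [← hsum (p m), hane, zero_add, hsingle]
        have hne : m ≠ i := fun h => hJm (h ▸ hJp)
        rcases lt_or_gt_of_ne hne with hmi | him
        · have h0 : H i (p m) = 0 := hech i (p m) (hmono hmi)
          rw [h0] at hH
          exact (mul_eq_zero.mp hH.symm).resolve_right (hpos m).ne'
        · obtain ⟨h1, h2⟩ := hred i m him
          rw [hH] at h1 h2
          nlinarith [hpos m]
  intro c hc
  have hB0 : ∑ m, b m * H m c = 0 :=
    Finset.sum_eq_zero fun m _ => by rw [hbz (m : ℕ) m rfl, zero_mul]
  rw [← hsum c, ha c hc, hB0, add_zero]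

/-- Each row of an HNF matrix is "pure" with respect to a split of the columns
into two complementary supporting sets. -/
lemma hnf_row_pure {r n : ℕ} (H : Matrix (Fin r) (Fin n) ℤ) (p : Fin r → Fin n)
    (hmono : StrictMono p)
    (hech : ∀ (i : Fin r) (j : Fin n), (j : ℕ) < (p i : ℕ) → H i j = 0)
    (hpos : ∀ i, 0 < H i (p i))
    (hred : ∀ k i : Fin r, k < i → 0 ≤ H k (p i) ∧ H k (p i) < H i (p i))
    (J : Fin n → Prop) (i : Fin r) (a b : Fin r → ℤ)
    (hab : ∀ m, a m + b m = if i = m then 1 else 0)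
    (ha : ∀ c, ¬ J c → ∑ m, a m * H m c = 0)
    (hb : ∀ c, J c → ∑ m, b m * H m c = 0) :
    (∀ c, J c → H i c = 0) ∨ (∀ c, ¬ J c → H i c = 0) := by
  by_cases hJp : J (p i)
  · exact Or.inr (hnf_half H p hmono hech hpos hred J i a b hab ha hb hJp)
  · left
    have key := hnf_half H p hmono hech hpos hred (fun c => ¬ J c) i b a
      (fun m => by rw [← hab m]; ring)
      (fun c hc => hb c (not_not.mp hc)) (fun c hc => ha c hc) hJp
    intro c hc
    exact key c (not_not_intro hc)

/-- If the columns of an HNF matrix split into two sets that are pairwise orthogonal,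
then each row is supported on the side of its pivot. -/
lemma orth_row_pure {r n : ℕ} (H : Matrix (Fin r) (Fin n) ℤ) (p : Fin r → Fin n)
    (hmono : StrictMono p)
    (hech : ∀ (i : Fin r) (j : Fin n), (j : ℕ) < (p i : ℕ) → H i j = 0)
    (hpos : ∀ i, 0 < H i (p i))
    (J : Fin n → Prop)
    (hG : ∀ c c', J c → ¬ J c' → ∑ m, H m c * H m c' = 0) :
    ∀ (i : Fin r) (c : Fin n),
      ((J (p i) ∧ ¬ J c) ∨ (¬ J (p i) ∧ J c)) → H i c = 0 := by
  have main : ∀ N : ℕ, ∀ i : Fin r, (i : ℕ) = N → ∀ c : Fin n,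
      ((J (p i) ∧ ¬ J c) ∨ (¬ J (p i) ∧ J c)) → H i c = 0 := by
    intro N
    induction N using Nat.strong_induction_on with
    | _ N IH =>
      intro i hiN c hcase
      have IH' : ∀ m : Fin r, m < i → ∀ c : Fin n,
          ((J (p m) ∧ ¬ J c) ∨ (¬ J (p m) ∧ J c)) → H m c = 0 := by
        intro m hm
        exact IH (m : ℕ) (by rw [← hiN]; exact hm) m rfl
      have hsum0 : ∑ m, H m (p i) * H m c = 0 := by
        rcases hcase with ⟨h1, h2⟩ | ⟨h1, h2⟩
        · exact hG (p i) c h1 h2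
        · have h0 := hG c (p i) h2 h1
          calc ∑ m, H m (p i) * H m c = ∑ m, H m c * H m (p i) :=
                Finset.sum_congr rfl fun m _ => mul_comm _ _
            _ = 0 := h0
      have hsingle : ∑ m, H m (p i) * H m c = H i (p i) * H i c := by
        apply Finset.sum_eq_single
        · intro m _ hne
          rcases lt_or_gt_of_ne hne with hlt | hgt
          · rcases hcase with ⟨h1, h2⟩ | ⟨h1, h2⟩
            · by_cases hm : J (p m)
              · rw [IH' m hlt c (Or.inl ⟨hm, h2⟩), mul_zero]
              · rw [IH' m hlt (p i) (Or.inr ⟨hm, h1⟩), zero_mul]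
            · by_cases hm : J (p m)
              · rw [IH' m hlt (p i) (Or.inl ⟨hm, h1⟩), zero_mul]
              · rw [IH' m hlt c (Or.inr ⟨hm, h2⟩), mul_zero]
          · rw [hech m (p i) (hmono hgt), zero_mul]
        · intro h; exact absurd (Finset.mem_univ i) h
      rw [hsingle] at hsum0
      exact (mul_eq_zero.mp hsum0).resolve_left (hpos i).ne'
  exact fun i => main (i : ℕ) i rfl

lemma permMatrix_transpose {n : ℕ} (σ : Equiv.Perm (Fin n)) :
    (σ.permMatrix ℤ)ᵀ = (σ⁻¹).permMatrix ℤ := by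
  rw [Equiv.Perm.permMatrix, Equiv.Perm.permMatrix, ← PEquiv.toMatrix_symm,
    ← Equiv.toPEquiv_symm]
  rfl

lemma permMatrix_mul_self {n : ℕ} (σ : Equiv.Perm (Fin n)) :
    (σ.permMatrix ℤ) * ((σ⁻¹).permMatrix ℤ) = 1 := by
  rw [Equiv.Perm.permMatrix, Equiv.Perm.permMatrix, ← PEquiv.toMatrix_trans,
    ← Equiv.toPEquiv_trans]
  have h0 : σ.trans σ⁻¹ = Equiv.refl (Fin n) := Equiv.self_trans_symm σ
  rw [h0, Equiv.toPEquiv_refl, PEquiv.toMatrix_refl]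

lemma isUnit_permMatrix_det {n : ℕ} (σ : Equiv.Perm (Fin n)) :
    IsUnit (σ.permMatrix ℤ).det := by
  rw [Matrix.det_permutation]
  exact (Equiv.Perm.sign σ).isUnit.map (Int.castRingHom ℤ).toMonoidHom

/-- Conjugation of a square matrix by a permutation matrix, entrywise. -/
lemma perm_conj_apply {n : ℕ} (G : Matrix (Fin n) (Fin n) ℤ) (σ : Equiv.Perm (Fin n))
    (u v : Fin n) :
    ((σ.permMatrix ℤ)ᵀ * G * σ.permMatrix ℤ) u v = G (σ.symm u) (σ.symm v) := by
  rw [permMatrix_transpose, Equiv.Perm.permMatrix, Equiv.Perm.permMatrix,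
    PEquiv.toMatrix_toPEquiv_mul, PEquiv.mul_toMatrix_toPEquiv]
  simp [Matrix.submatrix_apply]

lemma rank_unit_mul {r n : ℕ} (P : Matrix (Fin r) (Fin r) ℚ) (M : Matrix (Fin r) (Fin n) ℚ)
    (h : IsUnit P.det) : (P * M).rank = M.rank := by
  apply le_antisymm (Matrix.rank_mul_le_right P M)
  conv_lhs => rw [show M = P⁻¹ * (P * M) by
    rw [← Matrix.mul_assoc, Matrix.nonsing_inv_mul P h, Matrix.one_mul]]
  exact Matrix.rank_mul_le_right _ _

lemma map_mul_q {r n : ℕ} (P : Matrix (Fin r) (Fin r) ℤ) (M : Matrix (Fin r) (Fin n) ℤ) :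
    (P * M).map (Int.cast : ℤ → ℚ) = P.map (Int.cast : ℤ → ℚ) * M.map (Int.cast : ℤ → ℚ) := by
  ext i j
  simp [Matrix.mul_apply, Matrix.map_apply]

lemma isUnit_map_det {r : ℕ} (P : Matrix (Fin r) (Fin r) ℤ) (h : IsUnit P.det) :
    IsUnit ((P.map (Int.cast : ℤ → ℚ)).det) := by
  rw [show P.map (Int.cast : ℤ → ℚ) = (Int.castRingHom ℚ).mapMatrix P from rfl,
    ← RingHom.map_det]
  exact h.map (Int.castRingHom ℚ)

lemma rankQ_unit_mul {r n : ℕ} (P : Matrix (Fin r) (Fin r) ℤ) (M : Matrix (Fin r) (Fin n) ℤ)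
    (h : IsUnit P.det) : rankQ (P * M) = rankQ M := by
  unfold rankQ
  rw [map_mul_q]
  exact rank_unit_mul _ _ (isUnit_map_det P h)

lemma rankQ_le_of_zero_rows {r r' n : ℕ} (H : Matrix (Fin r) (Fin n) ℤ) (hr' : r' ≤ r)
    (hzero : ∀ i : Fin r, r' ≤ (i : ℕ) → ∀ j, H i j = 0) :
    rankQ H ≤ r' := by
  set E : Matrix (Fin r) (Fin r') ℚ :=
    Matrix.of (fun i m => if (i : ℕ) = (m : ℕ) then 1 else 0) with hE
  set T : Matrix (Fin r') (Fin n) ℚ :=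
    Matrix.of (fun m j => ((H (Fin.castLE hr' m) j : ℤ) : ℚ)) with hT
  have hfact : H.map (Int.cast : ℤ → ℚ) = E * T := by
    ext i j
    rw [Matrix.mul_apply]
    by_cases hi : (i : ℕ) < r'
    · rw [Finset.sum_eq_single (⟨(i : ℕ), hi⟩ : Fin r')]
      · have hcast : Fin.castLE hr' (⟨(i : ℕ), hi⟩ : Fin r') = i := by
          apply Fin.ext; rfl
        simp [hE, hT, hcast]
      · intro m _ hne
        have hnev : ¬ ((i : ℕ) = (m : ℕ)) := fun h => hne (Fin.ext h.symm)
        simp [hE, hnev]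
      · intro h; exact absurd (Finset.mem_univ _) h
    · have hall : ∀ m : Fin r', ¬ ((i : ℕ) = (m : ℕ)) := fun m h => hi (h ▸ m.isLt)
      have h0 : H i j = 0 := hzero i (not_lt.mp hi) j
      simp [hE, hall, Matrix.map_apply, h0]
  unfold rankQ
  rw [hfact]
  calc (E * T).rank ≤ T.rank := Matrix.rank_mul_le_right E T
    _ ≤ Fintype.card (Fin r') := Matrix.rank_le_card_height T
    _ = r' := Fintype.card_fin r'

end Aux

/-- for a full row rank integer matrix with no zero column,
decomposability is equivalent to reducibility of `HNF(A)ᵀ · HNF(A)`. -/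
theorem decomposable_iff_gram_reducible {r n : ℕ}
    (A H : Matrix (Fin r) (Fin n) ℤ)
    (hrank : rankQ A = r) (hcol : ∀ j, ∃ i, A i j ≠ 0)
    (hH : IsHNFOf H A) :
    Decomposable A ↔ Reducible (Hᵀ * H) := by
  obtain ⟨⟨r', hr', piv, hmono, hech0, hpos0, hred0, hzero⟩, P₀, hP₀, hPA⟩ := hH
  have hP₀P₀ : P₀⁻¹ * P₀ = 1 := Matrix.nonsing_inv_mul P₀ hP₀
  -- all rows of `H` carry a pivot
  have hrH : rankQ H = r := by
    have h1 : rankQ A = rankQ H := by rw [hPA]; exact rankQ_unit_mul P₀ H hP₀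
    rw [← h1]; exact hrank
  have hr'r : r' = r := le_antisymm hr' (hrH ▸ rankQ_le_of_zero_rows H hr' hzero)
  subst hr'r
  have hcast : ∀ i : Fin r', Fin.castLE hr' i = i := fun i => Fin.ext rfl
  have hech : ∀ (i : Fin r') (j : Fin n), (j : ℕ) < (piv i : ℕ) → H i j = 0 :=
    fun i j hj => by have := hech0 i j hj; rwa [hcast] at this
  have hpos : ∀ i : Fin r', 0 < H i (piv i) :=
    fun i => by have := hpos0 i; rwa [hcast] at this
  have hred : ∀ k i : Fin r', k < i → 0 ≤ H k (piv i) ∧ H k (piv i) < H i (piv i) :=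
    fun k i hki => by have := hred0 k i hki; rwa [hcast, hcast] at this
  -- `H` has no zero column
  have hHcol : ∀ j, ∃ i, H i j ≠ 0 := by
    intro j
    by_contra hzc
    push_neg at hzc
    obtain ⟨i, hAij⟩ := hcol j
    apply hAij
    rw [hPA, Matrix.mul_apply]
    exact Finset.sum_eq_zero fun m _ => by rw [hzc m, mul_zero]
  constructor
  · -- Decomposable → Reducible
    rintro ⟨P, σ, k, l, hPdet, hk0, hkr, hl0, hln, hB⟩
    have hPP : P * P⁻¹ = 1 := Matrix.mul_nonsing_inv P hPdet
    set V := P₀⁻¹ * P with hV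
    have hVdet : IsUnit V.det := by
      rw [hV, Matrix.det_mul]
      exact (Matrix.isUnit_nonsing_inv_det P₀ hP₀).mul hPdet
    have hVB : V * (P⁻¹ * A * σ.permMatrix ℤ) = H * σ.permMatrix ℤ := by
      calc V * (P⁻¹ * A * σ.permMatrix ℤ)
          = P₀⁻¹ * (P * (P⁻¹ * (A * σ.permMatrix ℤ))) := by
            rw [hV]; simp only [Matrix.mul_assoc]
        _ = P₀⁻¹ * (A * σ.permMatrix ℤ) := by
            rw [← Matrix.mul_assoc P, hPP, Matrix.one_mul]
        _ = (P₀⁻¹ * P₀) * (H * σ.permMatrix ℤ) := by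
            rw [hPA]; simp only [Matrix.mul_assoc]
        _ = H * σ.permMatrix ℤ := by rw [hP₀P₀, Matrix.one_mul]
    have hVV : V⁻¹ * V = 1 := Matrix.nonsing_inv_mul V hVdet
    have hVV' : V * V⁻¹ = 1 := Matrix.mul_nonsing_inv V hVdet
    set D : Matrix (Fin r') (Fin r') ℤ :=
      Matrix.diagonal (fun m => if (m : ℕ) < k then 1 else 0) with hD
    set D' : Matrix (Fin r') (Fin r') ℤ :=
      Matrix.diagonal (fun m => if (m : ℕ) < k then 0 else 1) with hD'
    have hDD' : D + D' = 1 := by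
      ext a b
      by_cases hab : a = b
      · subst hab
        simp only [hD, hD', Matrix.add_apply, Matrix.diagonal_apply_eq, Matrix.one_apply_eq]
        split_ifs <;> ring
      · simp only [hD, hD', Matrix.add_apply, Matrix.diagonal_apply_ne _ hab,
          Matrix.one_apply_ne hab, add_zero]
    set Ca := V * (D * V⁻¹) with hCa
    set Cb := V * (D' * V⁻¹) with hCb
    have hCab : Ca + Cb = 1 := by
      rw [hCa, hCb, ← Matrix.mul_add, ← Matrix.add_mul, hDD', Matrix.one_mul, hVV']
    have hBinv : V⁻¹ * (H * σ.permMatrix ℤ) = P⁻¹ * A * σ.permMatrix ℤ := by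
      rw [← hVB, ← Matrix.mul_assoc, hVV, Matrix.one_mul]
    -- entries of the two partial matrices
    have hXzero : ∀ (i : Fin r') (c : Fin n), l ≤ ((σ c : Fin n) : ℕ) → (Ca * H) i c = 0 := by
      intro i c hcl
      have h1 : Ca * H * σ.permMatrix ℤ = V * (D * (P⁻¹ * A * σ.permMatrix ℤ)) := by
        calc Ca * H * σ.permMatrix ℤ
            = V * (D * (V⁻¹ * (H * σ.permMatrix ℤ))) := by
              rw [hCa]; simp only [Matrix.mul_assoc]
          _ = V * (D * (P⁻¹ * A * σ.permMatrix ℤ)) := by rw [hBinv]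
      have h2 : (Ca * H) i c = (Ca * H * σ.permMatrix ℤ) i (σ c) := by
        rw [Equiv.Perm.permMatrix, PEquiv.mul_toMatrix_toPEquiv]
        simp [Matrix.submatrix_apply]
      rw [h2, h1, Matrix.mul_apply]
      apply Finset.sum_eq_zero
      intro m _
      have h3 : (D * (P⁻¹ * A * σ.permMatrix ℤ)) m (σ c) = 0 := by
        rw [hD, Matrix.diagonal_mul]
        by_cases hm : (m : ℕ) < k
        · rw [if_pos hm, one_mul]
          exact hB m (σ c) (Or.inl ⟨hm, hcl⟩)
        · rw [if_neg hm, zero_mul]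
      rw [h3, mul_zero]
    have hYzero : ∀ (i : Fin r') (c : Fin n), ((σ c : Fin n) : ℕ) < l → (Cb * H) i c = 0 := by
      intro i c hcl
      have h1 : Cb * H * σ.permMatrix ℤ = V * (D' * (P⁻¹ * A * σ.permMatrix ℤ)) := by
        calc Cb * H * σ.permMatrix ℤ
            = V * (D' * (V⁻¹ * (H * σ.permMatrix ℤ))) := by
              rw [hCb]; simp only [Matrix.mul_assoc]
          _ = V * (D' * (P⁻¹ * A * σ.permMatrix ℤ)) := by rw [hBinv]
      have h2 : (Cb * H) i c = (Cb * H * σ.permMatrix ℤ) i (σ c) := by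
        rw [Equiv.Perm.permMatrix, PEquiv.mul_toMatrix_toPEquiv]
        simp [Matrix.submatrix_apply]
      rw [h2, h1, Matrix.mul_apply]
      apply Finset.sum_eq_zero
      intro m _
      have h3 : (D' * (P⁻¹ * A * σ.permMatrix ℤ)) m (σ c) = 0 := by
        rw [hD', Matrix.diagonal_mul]
        by_cases hm : (m : ℕ) < k
        · rw [if_pos hm, zero_mul]
        · rw [if_neg hm, one_mul]
          exact hB m (σ c) (Or.inr ⟨not_lt.mp hm, hcl⟩)
      rw [h3, mul_zero]
    -- purity of each row of `H`
    have hpure : ∀ i : Fin r',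
        (∀ c, ((σ c : Fin n) : ℕ) < l → H i c = 0) ∨
        (∀ c, ¬ (((σ c : Fin n) : ℕ) < l) → H i c = 0) := by
      intro i
      apply hnf_row_pure H piv hmono hech hpos hred
        (fun c => ((σ c : Fin n) : ℕ) < l) i (fun m => Ca i m) (fun m => Cb i m)
      · intro m
        have := congrFun (congrFun hCab i) m
        simpa [Matrix.add_apply, Matrix.one_apply] using this
      · intro c hc
        have := hXzero i c (not_lt.mp hc)
        rwa [Matrix.mul_apply] at this
      · intro c hc
        have := hYzero i c hc
        rwa [Matrix.mul_apply] at this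
    refine ⟨σ, l, hl0, hln, ?_⟩
    intro u v hcase
    rw [perm_conj_apply, Matrix.mul_apply]
    apply Finset.sum_eq_zero
    intro m _
    rw [Matrix.transpose_apply]
    have hσu : (σ (σ.symm u) : ℕ) = (u : ℕ) := by rw [Equiv.apply_symm_apply]
    have hσv : (σ (σ.symm v) : ℕ) = (v : ℕ) := by rw [Equiv.apply_symm_apply]
    rcases hcase with ⟨hu, hv⟩ | ⟨hu, hv⟩
    · rcases hpure m with hpm | hpm
      · rw [hpm (σ.symm u) (by rw [hσu]; exact hu), zero_mul]
      · rw [hpm (σ.symm v) (by rw [hσv]; exact not_lt.mpr hv), mul_zero]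
    · rcases hpure m with hpm | hpm
      · rw [hpm (σ.symm v) (by rw [hσv]; exact hv), mul_zero]
      · rw [hpm (σ.symm u) (by rw [hσu]; exact not_lt.mpr hu), zero_mul]
  · -- Reducible → Decomposable
    rintro ⟨τ, s, hs0, hsn, hsplit⟩
    -- orthogonality of the two column classes
    have hG : ∀ c c', ((τ c : Fin n) : ℕ) < s → ¬ (((τ c' : Fin n) : ℕ) < s) →
        ∑ m, H m c * H m c' = 0 := by
      intro c c' hc hc'
      have h0 := hsplit (τ c) (τ c') (Or.inl ⟨hc, not_lt.mp hc'⟩)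
      rw [perm_conj_apply, Equiv.symm_apply_apply, Equiv.symm_apply_apply] at h0
      rw [← h0, Matrix.mul_apply]
      exact Finset.sum_congr rfl fun m _ => by rw [Matrix.transpose_apply]
    have hpure := orth_row_pure H piv hmono hech hpos
      (fun c => ((τ c : Fin n) : ℕ) < s) hG
    set R : Fin r' → Prop := fun i => ((τ (piv i) : Fin n) : ℕ) < s with hR
    haveI : DecidablePred R := fun i => Nat.decLt _ _
    set k := Fintype.card {i // R i} with hk
    have hkler : k ≤ r' := by
      rw [hk]
      simpa using Fintype.card_subtype_le R
    have hn0 : 0 < n := hs0.trans hsn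
    have hex1 : ∃ i, R i := by
      by_contra hno
      push_neg at hno
      set c := τ.symm ⟨0, hn0⟩ with hc
      have hJc : ((τ c : Fin n) : ℕ) < s := by
        rw [hc, Equiv.apply_symm_apply]
        exact hs0
      obtain ⟨i, hi⟩ := hHcol c
      exact hi (hpure i c (Or.inr ⟨hno i, hJc⟩))
    have hex2 : ∃ i, ¬ R i := by
      by_contra hno
      push_neg at hno
      set c := τ.symm ⟨s, hsn⟩ with hc
      have hJc : ¬ (((τ c : Fin n) : ℕ) < s) := by
        rw [hc, Equiv.apply_symm_apply]
        exact lt_irrefl s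
      obtain ⟨i, hi⟩ := hHcol c
      exact hi (hpure i c (Or.inl ⟨hno i, hJc⟩))
    have hk0 : 0 < k := by
      rw [hk, Fintype.card_pos_iff]
      obtain ⟨i, hi⟩ := hex1
      exact ⟨⟨i, hi⟩⟩
    have hkr : k < r' := by
      obtain ⟨i, hi⟩ := hex2
      have := Fintype.card_subtype_lt (p := R) hi
      rw [hk]
      simpa using this
    -- a permutation of the rows sorting class `R` first
    have hcards : Fintype.card {i // ¬ R i} = r' - k := by
      rw [Fintype.card_subtype_compl]
      simp [hk]
    let e1 : {i // R i} ≃ Fin k := Fintype.equivFinOfCardEq hk.symm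
    let e2 : {i // ¬ R i} ≃ Fin (r' - k) := Fintype.equivFinOfCardEq hcards
    let ρ : Equiv.Perm (Fin r') :=
      (Equiv.sumCompl R).symm.trans ((e1.sumCongr e2).trans
        (finSumFinEquiv.trans (finCongr (Nat.add_sub_cancel' hkler))))
    have hρ : ∀ i, R i ↔ ((ρ i : ℕ) < k) := by
      intro i
      by_cases hi : R i
      · simp only [ρ, Equiv.trans_apply]
        rw [Equiv.sumCompl_symm_apply_of_pos hi]
        simp only [Equiv.sumCongr_apply, Sum.map_inl, finSumFinEquiv_apply_left,
          finCongr_apply_coe]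
        exact ⟨fun _ => by simp, fun _ => hi⟩
      · simp only [ρ, Equiv.trans_apply]
        rw [Equiv.sumCompl_symm_apply_of_neg hi]
        simp only [Equiv.sumCongr_apply, Sum.map_inr, finSumFinEquiv_apply_right,
          finCongr_apply_coe]
        constructor
        · intro h; exact absurd h hi
        · intro h
          exfalso
          have : (Fin.natAdd k (e2 ⟨i, hi⟩) : ℕ) = k + (e2 ⟨i, hi⟩ : ℕ) := rfl
          omega
    refine ⟨P₀ * (ρ.permMatrix ℤ), τ, k, s, ?_, hk0, hkr, hs0, hsn, ?_⟩
    · rw [Matrix.det_mul]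
      exact hP₀.mul (isUnit_permMatrix_det ρ)
    · have hinv : (P₀ * (ρ.permMatrix ℤ))⁻¹ = ((ρ⁻¹).permMatrix ℤ) * P₀⁻¹ := by
        rw [Matrix.mul_inv_rev]
        congr 1
        exact Matrix.inv_eq_right_inv (permMatrix_mul_self ρ)
      have hmain : (P₀ * ρ.permMatrix ℤ)⁻¹ * A * τ.permMatrix ℤ
          = (H.submatrix (⇑(ρ⁻¹)) id).submatrix id ⇑τ.symm := by
        rw [hinv, hPA]
        have h1 : (ρ⁻¹).permMatrix ℤ * P₀⁻¹ * (P₀ * H) = (ρ⁻¹).permMatrix ℤ * H := by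
          rw [Matrix.mul_assoc, ← Matrix.mul_assoc P₀⁻¹, hP₀P₀, Matrix.one_mul]
        rw [h1, Equiv.Perm.permMatrix, PEquiv.toMatrix_toPEquiv_mul,
          Equiv.Perm.permMatrix, PEquiv.mul_toMatrix_toPEquiv]
      rw [hmain]
      intro u v hcase
      simp only [Matrix.submatrix_apply, id]
      rcases hcase with ⟨hu, hv⟩ | ⟨hu, hv⟩
      · apply hpure
        left
        constructor
        · show ((τ (piv (ρ⁻¹ u)) : Fin n) : ℕ) < s
          have hRi : R (ρ⁻¹ u) := by
            rw [hρ (ρ⁻¹ u), Equiv.Perm.coe_inv, Equiv.apply_symm_apply]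
            exact hu
          exact hRi
        · show ¬ (((τ (τ.symm v) : Fin n) : ℕ) < s)
          rw [Equiv.apply_symm_apply]
          exact not_lt.mpr hv
      · apply hpure
        right
        constructor
        · show ¬ (((τ (piv (ρ⁻¹ u)) : Fin n) : ℕ) < s)
          intro hcontra
          have hRi : R (ρ⁻¹ u) := hcontra
          rw [hρ (ρ⁻¹ u), Equiv.Perm.coe_inv, Equiv.apply_symm_apply] at hRi
          omega
        · show ((τ (τ.symm v) : Fin n) : ℕ) < s
          rw [Equiv.apply_symm_apply]
          exact hv
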